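/- There exists Λ > 0 such that for every λ ≥ Λ the generalized Chern–Simons equation Δu = λ e^u (e^u − 1)^5 + 4π Σ_{s=1}^N δ_{p_s} has a solution u : V → ℝ. -/

import Mathlib

open Real

/-- The graph Laplacian: `Δu(x) = (1/μ(x)) Σ_y w(x,y)(u(y) − u(x))`. -/
noncomputable def lapl {V : Type*} [Fintype V] (μ : V → ℝ) (w : V → V → ℝ) (u : V → ℝ) (x : V) : ℝ :=
  (1 / μ x) * ∑ y, w x y * (u y - u x)

/-- The integral on the graph: `∫_V f dμ = Σ_x μ(x) f(x)`. -/
noncomputable def integ {V : Type*} [Fintype V] (μ : V → ℝ) (f : V → ℝ) : ℝ := ∑ x, μ x * f x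

/-- The volume of the graph: `Vol(V) = Σ_x μ(x)`. -/
noncomputable def vol {V : Type*} [Fintype V] (μ : V → ℝ) : ℝ := ∑ x, μ x

/-- The Dirac mass at `p`. -/
noncomputable def dirac {V : Type*} [DecidableEq V] (μ : V → ℝ) (p x : V) : ℝ :=
  if x = p then 1 / μ p else 0

/-- The squared length of the gradient: `|∇u|²(x) = (1/(2μ(x))) Σ_y w(x,y)(u(y) − u(x))²`. -/
noncomputable def gradSq {V : Type*} [Fintype V] (μ : V → ℝ) (w : V → V → ℝ) (u : V → ℝ) (x : V) : ℝ :=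
  (1 / (2 * μ x)) * ∑ y, w x y * (u y - u x) ^ 2

/-- The gradient form `Γ(u,φ)(x) = (1/(2μ(x))) Σ_y w(x,y)(u(y) − u(x))(φ(y) − φ(x))`. -/
noncomputable def gamma {V : Type*} [Fintype V] (μ : V → ℝ) (w : V → V → ℝ) (u φ : V → ℝ) (x : V) : ℝ :=
  (1 / (2 * μ x)) * ∑ y, w x y * (u y - u x) * (φ y - φ x)

/-- `u` solves the generalized Chern–Simons equation
    `Δu = λ e^u (e^u − 1)^5 + 4π Σ_s δ_{p_s}` with parameter `lam`. -/
noncomputable def isSol {V : Type*} [Fintype V] [DecidableEq V] (μ : V → ℝ) (w : V → V → ℝ)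
    {N : ℕ} (p : Fin N → V) (lam : ℝ) (u : V → ℝ) : Prop :=
  ∀ x, lapl μ w u x =
    lam * Real.exp (u x) * (Real.exp (u x) - 1) ^ 5 + 4 * π * ∑ s, dirac μ (p s) x

/-- The energy functional
    `I_λ(v) = ∫_V [ (1/2)|∇v|² + (λ/6)(e^{u₀+v} − 1)^6 + (4πN/Vol(V)) v ] dμ`. -/
noncomputable def energy {V : Type*} [Fintype V] (μ : V → ℝ) (w : V → V → ℝ)
    (u0 : V → ℝ) (N : ℕ) (lam : ℝ) (v : V → ℝ) : ℝ :=
  integ μ (fun x => (1 / 2) * gradSq μ w v x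
    + (lam / 6) * (Real.exp (u0 x + v x) - 1) ^ 6 + (4 * π * N / vol μ) * v x)

/-- The Sobolev `W^{1,2}` norm `(∫_V (|∇v|² + v²) dμ)^{1/2}`. -/
noncomputable def sobNorm {V : Type*} [Fintype V] (μ : V → ℝ) (w : V → V → ℝ)
    (v : V → ℝ) : ℝ :=
  Real.sqrt (integ μ (fun x => gradSq μ w v x + v x ^ 2))

/-- The derivative of the energy functional at `v` in direction `φ`:
    `∫_V Γ(v,φ) dμ + λ ∫_V e^{u₀+v}(e^{u₀+v} − 1)^5 φ dμ + (4πN/Vol(V)) ∫_V φ dμ`. -/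
noncomputable def dEnergy {V : Type*} [Fintype V] (μ : V → ℝ) (w : V → V → ℝ)
    (u0 : V → ℝ) (N : ℕ) (lam : ℝ) (v φ : V → ℝ) : ℝ :=
  integ μ (gamma μ w v φ)
    + lam * integ μ (fun x => Real.exp (u0 x + v x) * (Real.exp (u0 x + v x) - 1) ^ 5 * φ x)
    + (4 * π * N / vol μ) * integ μ φ

open Finset Function Filter Set Topology

open Real Finset Function Filter Set Topology

section aux
variable {V : Type*} [Fintype V] [Nonempty V]

noncomputable def csLmap (μ : V → ℝ) (w : V → V → ℝ) : (V → ℝ) →ₗ[ℝ] (V → ℝ) where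
  toFun u := fun x => (∑ y, w x y * (u y - u x)) - μ x * u x
  map_add' u v := by
    funext x
    have : ∀ y, w x y * ((u y + v y) - (u x + v x))
        = w x y * (u y - u x) + w x y * (v y - v x) := fun y => by ring
    simp only [Pi.add_apply, this, Finset.sum_add_distrib]
    ring
  map_smul' c u := by
    funext x
    have : ∀ y, w x y * (c * u y - c * u x) = c * (w x y * (u y - u x)) := fun y => by ring
    simp only [Pi.smul_apply, smul_eq_mul, this, ← Finset.mul_sum, RingHom.id_apply]
    ring

lemma cs_nonpos (μ : V → ℝ) (w : V → V → ℝ) (hmu : ∀ x, 0 < μ x) (hnn : ∀ x y, 0 ≤ w x y)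
    (u g : V → ℝ) (hg : ∀ x, 0 ≤ g x)
    (heq : ∀ x, (∑ y, w x y * (u y - u x)) - μ x * u x = g x) : ∀ x, u x ≤ 0 := by
  obtain ⟨x0, -, hx0⟩ := Finset.exists_max_image (Finset.univ : Finset V) u
    ⟨Classical.arbitrary V, Finset.mem_univ _⟩
  have hsum : (∑ y, w x0 y * (u y - u x0)) ≤ 0 := by
    apply Finset.sum_nonpos
    intro y _
    exact mul_nonpos_of_nonneg_of_nonpos (hnn _ _) (sub_nonpos.mpr (hx0 y (Finset.mem_univ _)))
  have hu0 : u x0 ≤ 0 := by nlinarith [heq x0, hg x0, hmu x0]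
  intro x; exact le_trans (hx0 x (Finset.mem_univ _)) hu0

lemma cs_exists_sol (μ : V → ℝ) (w : V → V → ℝ) (hmu : ∀ x, 0 < μ x) (hnn : ∀ x y, 0 ≤ w x y)
    (g : V → ℝ) (hg : ∀ x, 0 ≤ g x) :
    ∃ h : V → ℝ, (∀ x, (∑ y, w x y * (h y - h x)) = μ x * h x + g x) ∧ ∀ x, h x ≤ 0 := by
  have hinj : Function.Injective (csLmap μ w) := by
    rw [injective_iff_map_eq_zero]
    intro u hu
    have h1 : ∀ x, (∑ y, w x y * (u y - u x)) - μ x * u x = 0 := fun x => congrFun hu x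
    have hle := cs_nonpos μ w hmu hnn u 0 (fun _ => le_refl 0) (fun x => by simpa using h1 x)
    have h2 : ∀ x, (∑ y, w x y * ((-u) y - (-u) x)) - μ x * (-u) x = 0 := by
      intro x
      simp only [Pi.neg_apply]
      have e : (∑ y, w x y * (-u y - -u x)) = -∑ y, w x y * (u y - u x) := by
        rw [← Finset.sum_neg_distrib]
        exact Finset.sum_congr rfl fun y _ => by ring
      rw [e]
      have := h1 x; linarith
    have hge := cs_nonpos μ w hmu hnn (-u) 0 (fun _ => le_refl 0) (fun x => by simpa using h2 x)
    funext x
    have h3 := hge x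
    simp only [Pi.neg_apply] at h3
    have h4 := hle x
    simp only [Pi.zero_apply]
    linarith
  have hsurj : Function.Surjective (csLmap μ w) :=
    (LinearMap.injective_iff_surjective).mp hinj
  obtain ⟨h, hh⟩ := hsurj g
  have heq : ∀ x, (∑ y, w x y * (h y - h x)) - μ x * h x = g x := fun x => congrFun hh x
  exact ⟨h, fun x => by have := heq x; linarith,
    cs_nonpos μ w hmu hnn h g hg heq⟩

end aux

lemma deriv_nonneg_of_right_min {φ : ℝ → ℝ} {a d : ℝ} (hd : HasDerivAt φ d a)
    (h : ∀ᶠ t in 𝓝[>] a, φ a ≤ φ t) : 0 ≤ d := by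
  have hs : Tendsto (slope φ a) (𝓝[≠] a) (𝓝 d) := hasDerivAt_iff_tendsto_slope.mp hd
  have hs' : Tendsto (slope φ a) (𝓝[>] a) (𝓝 d) :=
    hs.mono_left (nhdsWithin_mono a fun t ht => ne_of_gt ht)
  refine ge_of_tendsto hs' ?_
  filter_upwards [h, self_mem_nhdsWithin] with t ht ht'
  rw [slope_def_field]
  exact div_nonneg (by linarith) (by simp only [Set.mem_Ioi] at ht'; linarith)

lemma deriv_nonpos_of_left_min {φ : ℝ → ℝ} {a d : ℝ} (hd : HasDerivAt φ d a)
    (h : ∀ᶠ t in 𝓝[<] a, φ a ≤ φ t) : d ≤ 0 := by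
  have hs : Tendsto (slope φ a) (𝓝[≠] a) (𝓝 d) := hasDerivAt_iff_tendsto_slope.mp hd
  have hs' : Tendsto (slope φ a) (𝓝[<] a) (𝓝 d) :=
    hs.mono_left (nhdsWithin_mono a fun t ht => ne_of_lt ht)
  refine le_of_tendsto hs' ?_
  filter_upwards [h, self_mem_nhdsWithin] with t ht ht'
  rw [slope_def_field]
  apply div_nonpos_of_nonneg_of_nonpos (by linarith)
  simp only [Set.mem_Iio] at ht'; linarith

section energy
variable {V : Type*} [Fintype V] [DecidableEq V]

noncomputable def csEnergy (μ : V → ℝ) (w : V → V → ℝ) {N : ℕ} (p : Fin N → V)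
    (lam : ℝ) (v : V → ℝ) : ℝ :=
  (1/4) * (∑ a, ∑ b, w a b * (v b - v a) ^ 2)
    + (lam / 6) * (∑ a, μ a * (Real.exp (v a) - 1) ^ 6)
    + 4 * π * ∑ s, v (p s)

omit [DecidableEq V] in
lemma csEnergy_continuous (μ : V → ℝ) (w : V → V → ℝ) {N : ℕ} (p : Fin N → V) (lam : ℝ) :
    Continuous (csEnergy μ w p lam) := by
  unfold csEnergy
  fun_prop

omit [Fintype V] in
lemma coord_hasDerivAt (u : V → ℝ) (x a : V) (t : ℝ) :
    HasDerivAt (fun t => Function.update u x t a) (if a = x then (1:ℝ) else 0) t := by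
  by_cases h : a = x
  · subst h
    simp only [Function.update_self, if_pos rfl]
    exact hasDerivAt_id' t
  · simp only [Function.update_of_ne h, if_neg h]
    exact hasDerivAt_const t _

lemma csEnergy_hasDerivAt (μ : V → ℝ) (w : V → V → ℝ) {N : ℕ} (p : Fin N → V)
    (lam : ℝ) (hsymm : ∀ x y, w x y = w y x) (u : V → ℝ) (x : V) (t : ℝ) :
    HasDerivAt (fun t => csEnergy μ w p lam (Function.update u x t))
      ((∑ y, w x y * (t - Function.update u x t y))
        + lam * μ x * Real.exp t * (Real.exp t - 1) ^ 5
        + 4 * π * ∑ s, (if p s = x then (1:ℝ) else 0)) t := by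
  set v := Function.update u x t with hv
  set δ : V → ℝ := fun a => if a = x then (1:ℝ) else 0 with hδ
  have h1 : HasDerivAt (fun t => (1/4) * (∑ a, ∑ b, w a b * (Function.update u x t b - Function.update u x t a) ^ 2))
      ((1/4) * (∑ a, ∑ b, w a b * (2 * (v b - v a) ^ 1 * (δ b - δ a)))) t := by
    apply HasDerivAt.const_mul
    apply HasDerivAt.fun_sum
    intro a _
    apply HasDerivAt.fun_sum
    intro b _
    exact (((coord_hasDerivAt u x b t).sub (coord_hasDerivAt u x a t)).pow 2).const_mul _
  have h2 : HasDerivAt (fun t => (lam/6) * (∑ a, μ a * (Real.exp (Function.update u x t a) - 1) ^ 6))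
      ((lam/6) * (∑ a, μ a * (6 * (Real.exp (v a) - 1) ^ 5 * (Real.exp (v a) * δ a)))) t := by
    apply HasDerivAt.const_mul
    apply HasDerivAt.fun_sum
    intro a _
    exact ((((coord_hasDerivAt u x a t).exp).sub_const 1).pow 6).const_mul _
  have h3 : HasDerivAt (fun t => 4 * π * ∑ s, Function.update u x t (p s))
      (4 * π * ∑ s, δ (p s)) t := by
    apply HasDerivAt.const_mul
    apply HasDerivAt.fun_sum
    intro s _
    exact coord_hasDerivAt u x (p s) t
  have H := (h1.add h2).add h3
  have e1 : (1/4) * (∑ a, ∑ b, w a b * (2 * (v b - v a) ^ 1 * (δ b - δ a)))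
      = ∑ y, w x y * (t - v y) := by
    have expand : ∀ a, ∑ b, w a b * (2 * (v b - v a) ^ 1 * (δ b - δ a))
        = (∑ b, (2 * w a b * (v b - v a)) * δ b) - (∑ b, 2 * w a b * (v b - v a)) * δ a := by
      intro a
      rw [Finset.sum_mul, ← Finset.sum_sub_distrib]
      exact Finset.sum_congr rfl fun b _ => by ring
    simp only [expand]
    rw [Finset.sum_sub_distrib]
    have eδ1 : ∀ a, (∑ b, (2 * w a b * (v b - v a)) * δ b) = 2 * w a x * (v x - v a) := by
      intro a
      simp only [hδ, mul_ite, mul_one, mul_zero]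
      rw [Finset.sum_ite_eq' Finset.univ x]
      simp
    have eδ2 : (∑ a, (∑ b, 2 * w a b * (v b - v a)) * δ a) = ∑ b, 2 * w x b * (v b - v x) := by
      simp only [hδ, mul_ite, mul_one, mul_zero]
      rw [Finset.sum_ite_eq' Finset.univ x]
      simp
    simp only [eδ1, eδ2]
    rw [← Finset.sum_sub_distrib, Finset.mul_sum]
    refine Finset.sum_congr rfl fun y _ => ?_
    rw [hsymm y x]
    have hvx : v x = t := Function.update_self x t u
    rw [hvx]
    ring
  have e2 : (lam/6) * (∑ a, μ a * (6 * (Real.exp (v a) - 1) ^ 5 * (Real.exp (v a) * δ a)))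
      = lam * μ x * Real.exp t * (Real.exp t - 1) ^ 5 := by
    have : ∀ a, μ a * (6 * (Real.exp (v a) - 1) ^ 5 * (Real.exp (v a) * δ a))
        = (if a = x then μ a * (6 * (Real.exp (v a) - 1) ^ 5 * Real.exp (v a)) else 0) := by
      intro a
      simp only [hδ]
      by_cases h : a = x <;> simp [h]
    simp only [this, Finset.sum_ite_eq' Finset.univ x, Finset.mem_univ, if_pos]
    have hvx : v x = t := Function.update_self x t u
    rw [hvx]
    ring
  rw [e1, e2] at H
  exact H

end energy

/-- there exists `Λ > 0` such that for every `λ ≥ Λ` the generalized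
Chern–Simons equation has a solution. -/
theorem existence_large_lambda {V : Type*} [Fintype V] [DecidableEq V] [Nonempty V]
    (w : V → V → ℝ) (μ : V → ℝ)
    (hsymm : ∀ x y, w x y = w y x) (hnn : ∀ x y, 0 ≤ w x y)
    (hconn : ∀ x y : V, Relation.ReflTransGen (fun a b => 0 < w a b) x y)
    (hmu : ∀ x, 0 < μ x)
    (N : ℕ) (hN : 1 ≤ N) (p : Fin N → V) (hp : Function.Injective p) :
    ∃ Lam : ℝ, 0 < Lam ∧ ∀ lam : ℝ, Lam ≤ lam → ∃ u : V → ℝ, isSol μ w p lam u := by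
  classical
  set n : V → ℝ := fun x => ∑ s, (if p s = x then (1:ℝ) else 0) with hn
  have hnneg : ∀ x, 0 ≤ n x := by
    intro x
    apply Finset.sum_nonneg
    intro s _
    split <;> norm_num
  set g : V → ℝ := fun x => 4 * Real.pi * n x with hgdef
  have hgnn : ∀ x, 0 ≤ g x := fun x =>
    mul_nonneg (by positivity) (hnneg x)
  obtain ⟨h, hheq, hhle⟩ := cs_exists_sol μ w hmu hnn g hgnn
  obtain ⟨z, -, hz⟩ := Finset.exists_min_image (Finset.univ : Finset V) h
    ⟨Classical.arbitrary V, Finset.mem_univ _⟩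
  set m : ℝ := h z with hm
  have hmle : ∀ x, m ≤ h x := fun x => hz x (Finset.mem_univ x)
  have hm0 : m ≤ 0 := hhle z
  have hexp1 : Real.exp (-1:ℝ) < 1 := by
    rw [← Real.exp_zero]
    exact Real.exp_lt_exp.mpr (by norm_num)
  set ε : ℝ := Real.exp (m - 1) * (1 - Real.exp (-1)) ^ 5 with hε
  have hεpos : 0 < ε :=
    mul_pos (Real.exp_pos _) (pow_pos (by linarith) 5)
  refine ⟨(1 - m) / ε, div_pos (by linarith) hεpos, ?_⟩
  intro lam hlam
  have hlam0 : 0 < lam := lt_of_lt_of_le (div_pos (by linarith) hεpos) hlam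
  have hlamε : 1 - m ≤ lam * ε := by
    rw [div_le_iff₀ hεpos] at hlam
    linarith
  -- sub/super solution bounds
  set lo : V → ℝ := fun y => h y - 1 with hlo
  set hi : V → ℝ := fun y => h y - m with hhi
  have hlohi : ∀ y, lo y ≤ hi y := fun y => by simp only [hlo, hhi]; linarith
  set S : Set (V → ℝ) := Set.univ.pi fun y => Set.Icc (lo y) (hi y) with hS
  have hScomp : IsCompact S := isCompact_univ_pi fun y => isCompact_Icc
  have hSne : S.Nonempty := ⟨lo, fun y _ => ⟨le_refl _, hlohi y⟩⟩
  obtain ⟨u, huS, humin⟩ :=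
    hScomp.exists_isMinOn hSne (csEnergy_continuous μ w p lam).continuousOn
  have hubd : ∀ y, lo y ≤ u y ∧ u y ≤ hi y := fun y => huS y (Set.mem_univ y)
  -- key equation at each vertex
  have key : ∀ x, (∑ y, w x y * (u y - u x))
      = lam * μ x * Real.exp (u x) * (Real.exp (u x) - 1) ^ 5 + 4 * Real.pi * n x := by
    intro x
    have hupdate : Function.update u x (u x) = u := Function.update_eq_self x u
    have hd : HasDerivAt (fun t => csEnergy μ w p lam (Function.update u x t))
        ((∑ y, w x y * (u x - u y))
          + lam * μ x * Real.exp (u x) * (Real.exp (u x) - 1) ^ 5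
          + 4 * Real.pi * n x) (u x) := by
      have := csEnergy_hasDerivAt μ w p lam hsymm u x (u x)
      rwa [hupdate] at this
    set Fx : ℝ := (∑ y, w x y * (u x - u y))
        + lam * μ x * Real.exp (u x) * (Real.exp (u x) - 1) ^ 5
        + 4 * Real.pi * n x with hFx
    have hgx : g x = 4 * Real.pi * n x := rfl
    have hmem : ∀ t : ℝ, lo x ≤ t → t ≤ hi x → Function.update u x t ∈ S := by
      intro t h1 h2 y _
      by_cases hy : y = x
      · subst hy
        simp only [Function.update_self]
        exact ⟨h1, h2⟩
      · simp only [Function.update_of_ne hy]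
        exact ⟨(hubd y).1, (hubd y).2⟩
    have hmin' : ∀ t : ℝ, lo x ≤ t → t ≤ hi x →
        csEnergy μ w p lam (Function.update u x (u x)) ≤ csEnergy μ w p lam (Function.update u x t) := by
      intro t h1 h2
      rw [hupdate]
      exact isMinOn_iff.mp humin _ (hmem t h1 h2)
    have hsumflip : (∑ y, w x y * (h x - h y)) = -(μ x * h x + g x) := by
      rw [← hheq x, ← Finset.sum_neg_distrib]
      exact Finset.sum_congr rfl fun y _ => by ring
    -- Claim B : 0 ≤ Fx
    have hB : 0 ≤ Fx := by
      rcases lt_or_eq_of_le (hubd x).2 with hlt | heq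
      · apply deriv_nonneg_of_right_min hd
        have hIoo : Set.Ioo (u x) (hi x) ∈ 𝓝[>] (u x) :=
          Ioo_mem_nhdsGT_of_mem ⟨le_refl _, hlt⟩
        filter_upwards [hIoo] with t ht
        exact hmin' t (le_trans (hubd x).1 ht.1.le) ht.2.le
      · -- u x = hi x : supersolution side
        have hterm1 : (∑ y, w x y * (hi x - hi y)) ≤ ∑ y, w x y * (u x - u y) := by
          apply Finset.sum_le_sum
          intro y _
          apply mul_le_mul_of_nonneg_left _ (hnn x y)
          linarith [heq, (hubd y).2]
        have hhi_eq : (∑ y, w x y * (hi x - hi y)) = -(μ x * h x + g x) := by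
          rw [← hsumflip]
          exact Finset.sum_congr rfl fun y _ => by simp only [hhi]; ring
        have hux0 : 0 ≤ u x := by
          rw [heq]
          simp only [hhi]
          linarith [hmle x]
        have hexp_ge : (1:ℝ) ≤ Real.exp (u x) := by
          rw [← Real.exp_zero]
          exact Real.exp_le_exp.mpr hux0
        have hpow : 0 ≤ (Real.exp (u x) - 1) ^ 5 := pow_nonneg (by linarith) 5
        have h2 : 0 ≤ lam * μ x * Real.exp (u x) * (Real.exp (u x) - 1) ^ 5 :=
          mul_nonneg (mul_nonneg (mul_nonneg hlam0.le (hmu x).le) (Real.exp_pos _).le) hpow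
        have h3 : 0 ≤ -(μ x * h x) := by nlinarith [hhle x, hmu x]
        rw [hhi_eq] at hterm1
        rw [hFx]
        rw [hgx] at hterm1
        linarith
    -- Claim A : Fx ≤ 0
    have hA : Fx ≤ 0 := by
      rcases lt_or_eq_of_le (hubd x).1 with hlt | heq
      · apply deriv_nonpos_of_left_min hd
        have hIoo : Set.Ioo (lo x) (u x) ∈ 𝓝[<] (u x) :=
          Ioo_mem_nhdsLT_of_mem ⟨hlt, le_refl _⟩
        filter_upwards [hIoo] with t ht
        exact hmin' t ht.1.le (le_trans ht.2.le (hubd x).2)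
      · -- u x = lo x : subsolution side
        have hterm1 : (∑ y, w x y * (u x - u y)) ≤ ∑ y, w x y * (lo x - lo y) := by
          apply Finset.sum_le_sum
          intro y _
          apply mul_le_mul_of_nonneg_left _ (hnn x y)
          linarith [heq, (hubd y).1]
        have hlo_eq : (∑ y, w x y * (lo x - lo y)) = -(μ x * h x + g x) := by
          rw [← hsumflip]
          exact Finset.sum_congr rfl fun y _ => by simp only [hlo]; ring
        have hux : u x = h x - 1 := by
          rw [← heq]
        set A : ℝ := Real.exp (u x) with hAdef
        have hA1 : A ≤ Real.exp (-1:ℝ) := by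
          rw [hAdef, hux]
          exact Real.exp_le_exp.mpr (by linarith [hhle x])
        have hA2 : Real.exp (m - 1) ≤ A := by
          rw [hAdef, hux]
          exact Real.exp_le_exp.mpr (by linarith [hmle x])
        have hApos : 0 < A := Real.exp_pos _
        have h1A : 1 - Real.exp (-1:ℝ) ≤ 1 - A := by linarith
        have hpowle : (1 - Real.exp (-1:ℝ)) ^ 5 ≤ (1 - A) ^ 5 :=
          pow_le_pow_left₀ (by linarith) h1A 5
        have hAε : ε ≤ A * (1 - A) ^ 5 := by
          rw [hε]
          exact mul_le_mul hA2 hpowle (pow_nonneg (by linarith) 5) hApos.le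
        have hkey : lam * A * (A - 1) ^ 5 ≤ h x := by
          have e5 : lam * A * (A - 1) ^ 5 = -(lam * (A * (1 - A) ^ 5)) := by ring
          rw [e5]
          have h1 : lam * ε ≤ lam * (A * (1 - A) ^ 5) :=
            mul_le_mul_of_nonneg_left hAε hlam0.le
          linarith [hmle x]
        have hmul : μ x * (lam * A * (A - 1) ^ 5) ≤ μ x * h x :=
          mul_le_mul_of_nonneg_left hkey (hmu x).le
        rw [hlo_eq] at hterm1
        rw [hFx]
        rw [hgx] at hterm1
        nlinarith [hterm1, hmul]
    have hFx0 : Fx = 0 := le_antisymm hA hB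
    have hflip : (∑ y, w x y * (u y - u x)) = -∑ y, w x y * (u x - u y) := by
      rw [← Finset.sum_neg_distrib]
      exact Finset.sum_congr rfl fun y _ => by ring
    rw [hflip]
    rw [hFx] at hFx0
    linarith
  -- conclude isSol
  refine ⟨u, ?_⟩
  intro x
  have hdsum : (∑ s, dirac μ (p s) x) = n x * (1 / μ x) := by
    unfold dirac
    rw [hn, Finset.sum_mul]
    refine Finset.sum_congr rfl fun s _ => ?_
    by_cases hxs : x = p s
    · rw [if_pos hxs, if_pos hxs.symm, hxs]
      ring
    · rw [if_neg hxs, if_neg fun hc => hxs hc.symm]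
      ring
  unfold lapl
  rw [key x, hdsum]
  have hμne : μ x ≠ 0 := (hmu x).ne'
  field_simp
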